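/- If F = (X; f₁,…,f_N) is a point-fibred IFS on a compact Hausdorff space X with attractor A and coding map π, then A equals the range of the coding map, A = π(I^∞); moreover, for every σ ∈ I^∞ and every point a ∈ X, π(σ) = lim_{k→∞} f_{σ|k}(a), where f_{σ|k} := f_{σ₁} ∘ f_{σ₂} ∘ ⋯ ∘ f_{σ_k}. -/

import Mathlib

open Set Topology Filter

/-- `seqComp f σ k` is the composition `f_{σ|k} = f_{σ₁} ∘ f_{σ₂} ∘ ⋯ ∘ f_{σ_k}`
(with the sequence `σ` indexed from `0`). -/
def seqComp {X : Type*} {N : ℕ} (f : Fin N → X → X) (σ : ℕ → Fin N) : ℕ → X → X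
  | 0 => id
  | k + 1 => seqComp f σ k ∘ f (σ k)

/-- `PiMap f σ = ⋂_{k ≥ 1} f_{σ₁} ∘ ⋯ ∘ f_{σ_k}(X)`. -/
def PiMap {X : Type*} {N : ℕ} (f : Fin N → X → X) (σ : ℕ → Fin N) : Set X :=
  ⋂ k : ℕ, seqComp f σ (k + 1) '' Set.univ

/-- The Vietoris topology (on all subsets of `X`; the Vietoris topology on the
nonempty compact subsets `K(X)` is the subspace topology it induces): it is generated
by the sets `{B | B ⊆ U}` and `{B | B ∩ U ≠ ∅}` for `U ⊆ X` open. -/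
def vietoris (X : Type*) [TopologicalSpace X] : TopologicalSpace (Set X) :=
  TopologicalSpace.generateFrom
    ({S | ∃ U : Set X, IsOpen U ∧ S = {B : Set X | B ⊆ U}} ∪
     {S | ∃ U : Set X, IsOpen U ∧ S = {B : Set X | (B ∩ U).Nonempty}})

lemma seqComp_cont {X : Type*} [TopologicalSpace X] {N : ℕ} (f : Fin N → X → X)
    (hf : ∀ i, Continuous (f i)) (σ : ℕ → Fin N) : ∀ k, Continuous (seqComp f σ k)
  | 0 => continuous_id
  | k + 1 => (seqComp_cont f hf σ k).comp (hf (σ k))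

/-- A sequence of points chosen from a nested sequence of compact sets whose
intersection is contained in `{p}` converges to `p`. -/
lemma tendsto_nested {X : Type*} [TopologicalSpace X] [T2Space X]
    (K : ℕ → Set X) (hmono : ∀ k, K (k+1) ⊆ K k) (hcpt : ∀ k, IsCompact (K k))
    (p : X) (hp : (⋂ k, K k) ⊆ {p}) (x : ℕ → X) (hx : ∀ k, x (k+1) ∈ K k) :
    Tendsto x atTop (𝓝 p) := by
  have hanti : Antitone K := antitone_nat_of_succ_le hmono
  rw [tendsto_nhds]
  intro U hU hpU
  have hex : ∃ n, K n ⊆ U := by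
    by_contra h
    push_neg at h
    have hC : ∀ n, (K n ∩ Uᶜ).Nonempty := fun n => by
      obtain ⟨y, hy, hyU⟩ := Set.not_subset.1 (h n)
      exact ⟨y, hy, hyU⟩
    obtain ⟨y, hy⟩ := IsCompact.nonempty_iInter_of_sequence_nonempty_isCompact_isClosed
      (fun n => K n ∩ Uᶜ) (fun n => inter_subset_inter (hmono n) subset_rfl) hC
      ((hcpt 0).inter_right hU.isClosed_compl)
      (fun n => ((hcpt n).isClosed).inter hU.isClosed_compl)
    have hyK : y ∈ ⋂ k, K k := mem_iInter.2 fun k => (mem_iInter.1 hy k).1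
    have hyU : y ∉ U := (mem_iInter.1 hy 0).2
    exact hyU (hp hyK ▸ hpU)
  obtain ⟨n, hn⟩ := hex
  refine eventually_atTop.2 ⟨n + 1, fun k hk => ?_⟩
  cases k with
  | zero => omega
  | succ m => exact hn (hanti (Nat.succ_le_succ_iff.1 hk) (hx m))

/-- If `F` is a point-fibred IFS on a compact Hausdorff space `X` with
attractor `A` and coding map `π`, then `A = π(I^∞)`, and moreover
`π(σ) = lim_k f_{σ|k}(a)` for every `σ ∈ I^∞` and every `a ∈ X`. -/
theorem attractor_eq_range_codingMap
    {X : Type*} [TopologicalSpace X] [CompactSpace X] [T2Space X] [Nonempty X]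
    {N : ℕ} (hN : 0 < N) (f : Fin N → X → X) (hf : ∀ i, Continuous (f i))
    (π : (ℕ → Fin N) → X) (hπ : ∀ σ, PiMap f σ = {π σ})
    -- `A` is an attractor of `F`:
    (A : Set X) (hA₁ : A.Nonempty) (hA₂ : IsCompact A) (hA₃ : (⋃ i, f i '' A) = A)
    (hA₄ : ∃ U : Set X, IsOpen U ∧ A ⊆ U ∧
      ∀ B : Set X, B.Nonempty → IsCompact B → B ⊆ U →
        Filter.Tendsto (fun k => (fun C : Set X => ⋃ i, f i '' C)^[k] B)
          Filter.atTop (@nhds (Set X) (vietoris X) A)) :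
    A = Set.range π ∧
      ∀ (σ : ℕ → Fin N) (a : X),
        Filter.Tendsto (fun k => seqComp f σ k a) Filter.atTop (nhds (π σ)) := by
  -- invariance of `A` under each `f i`
  have hinv : ∀ i, f i '' A ⊆ A := fun i x hx => by
    rw [← hA₃]; exact mem_iUnion.2 ⟨i, hx⟩
  -- the nested "cylinder" sets
  set K : (ℕ → Fin N) → ℕ → Set X := fun σ k => seqComp f σ (k+1) '' Set.univ with hK
  have hKmono : ∀ σ k, K σ (k+1) ⊆ K σ k := by
    intro σ k
    show seqComp f σ (k+2) '' Set.univ ⊆ seqComp f σ (k+1) '' Set.univ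
    rw [show seqComp f σ (k+2) = seqComp f σ (k+1) ∘ f (σ (k+1)) from rfl, Set.image_comp]
    exact Set.image_mono (Set.subset_univ _)
  have hKcpt : ∀ σ k, IsCompact (K σ k) :=
    fun σ k => (isCompact_univ).image (seqComp_cont f hf σ (k+1))
  have hKint : ∀ σ, (⋂ k, K σ k) = {π σ} := fun σ => hπ σ
  constructor
  · -- A = range π
    apply Set.Subset.antisymm
    · -- A ⊆ range π : build an address for each point of A
      intro a haA
      have hstep : ∀ x : X, x ∈ A → ∃ (i : Fin N) (y : X), y ∈ A ∧ f i y = x := by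
        intro x hx
        rw [← hA₃] at hx
        obtain ⟨i, hi⟩ := mem_iUnion.1 hx
        obtain ⟨y, hyA, hfy⟩ := hi
        exact ⟨i, y, hyA, hfy⟩
      choose i y hyA hfy using hstep
      let s : ℕ → {x : X // x ∈ A} := fun k =>
        Nat.rec ⟨a, haA⟩ (fun _ p => ⟨y p.1 p.2, hyA p.1 p.2⟩) k
      let σ : ℕ → Fin N := fun k => i (s k).1 (s k).2
      have hs : ∀ k, f (σ k) (s (k+1)).1 = (s k).1 := fun k => hfy (s k).1 (s k).2
      have hcomp : ∀ k, seqComp f σ k (s k).1 = a := by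
        intro k
        induction k with
        | zero => rfl
        | succ m ih =>
          show seqComp f σ m (f (σ m) (s (m+1)).1) = a
          rw [hs m]; exact ih
      have haP : a ∈ PiMap f σ := by
        refine mem_iInter.2 fun k => ⟨(s (k+1)).1, Set.mem_univ _, hcomp (k+1)⟩
      rw [hπ σ] at haP
      exact ⟨σ, haP.symm⟩
    · -- range π ⊆ A
      rintro _ ⟨σ, rfl⟩
      set T : ℕ → Set X := fun k => seqComp f σ (k+1) '' A with hT
      have hTA : ∀ k, seqComp f σ k '' A ⊆ A := by
        intro k
        induction k with
        | zero => rw [show seqComp f σ 0 = id from rfl, Set.image_id]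
        | succ m ih =>
          rw [show seqComp f σ (m+1) = seqComp f σ m ∘ f (σ m) from rfl, Set.image_comp]
          exact (Set.image_mono (hinv (σ m))).trans ih
      have hTmono : ∀ k, T (k+1) ⊆ T k := by
        intro k
        show seqComp f σ (k+2) '' A ⊆ seqComp f σ (k+1) '' A
        rw [show seqComp f σ (k+2) = seqComp f σ (k+1) ∘ f (σ (k+1)) from rfl, Set.image_comp]
        exact Set.image_mono (hinv (σ (k+1)))
      have hTne : ∀ k, (T k).Nonempty := fun k => hA₁.image _
      obtain ⟨z, hz⟩ := IsCompact.nonempty_iInter_of_sequence_nonempty_isCompact_isClosed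
        T hTmono hTne (hA₂.image (seqComp_cont f hf σ 1))
        (fun k => ((hA₂.image (seqComp_cont f hf σ (k+1))).isClosed))
      have hzK : z ∈ ⋂ k, K σ k :=
        mem_iInter.2 fun k => Set.image_mono (Set.subset_univ A) (mem_iInter.1 hz k)
      have hzπ : z = π σ := by
        rw [hKint σ] at hzK; exact hzK
      have : z ∈ A := hTA 1 (mem_iInter.1 hz 0)
      rwa [hzπ] at this
  · -- convergence
    intro σ a
    refine tendsto_nested (K σ) (hKmono σ) (hKcpt σ) (π σ) (by rw [hKint σ]) _ ?_
    intro k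
    exact ⟨a, Set.mem_univ _, rfl⟩
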